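/- Let 𝕋 = {z ∈ ℂ : |z| = 1} be the circle group with normalized Haar (probability) measure μ, and let ρ be a Borel probability measure on 𝕋. Then for every Borel set X ⊆ 𝕋 and every integer k ∈ ℤ: ∫_𝕋 z^k · ρ(z⁻¹X) dμ(z) = (∫_𝕋 y^{−k} dρ(y)) · (∫_X z^k dμ(z)). -/

import Mathlib

open MeasureTheory

/-- The Borel σ-algebra on the circle group `𝕋`. -/
noncomputable instance : MeasurableSpace Circle := borel Circle

instance : BorelSpace Circle := ⟨rfl⟩

lemma Circle.coe_pow' (z : Circle) (n : ℕ) : ((z ^ n : Circle) : ℂ) = (z : ℂ) ^ n := by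
  induction n with
  | zero => simp
  | succ n ih => rw [pow_succ, pow_succ, Circle.coe_mul, ih]

lemma Circle.coe_zpow' (z : Circle) (k : ℤ) : ((z ^ k : Circle) : ℂ) = (z : ℂ) ^ k := by
  cases k with
  | ofNat n => simpa [zpow_natCast] using Circle.coe_pow' z n
  | negSucc n => simp [zpow_negSucc, Circle.coe_pow']

lemma Circle.continuous_zpow_coe (k : ℤ) : Continuous fun z : Circle => ((z : ℂ) ^ k) := by
  have : Continuous fun z : Circle => ((z ^ k : Circle) : ℂ) :=
    continuous_subtype_val.comp (continuous_zpow k)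
  simpa [Circle.coe_zpow'] using this

lemma Circle.norm_zpow_coe (z : Circle) (k : ℤ) : ‖(z : ℂ) ^ k‖ = 1 := by
  rw [norm_zpow, Circle.norm_coe, one_zpow]

/-- Let `𝕋` be the circle group with its normalized Haar (probability) measure `μ` and `ρ`
a Borel probability measure on `𝕋`. For every Borel `X ⊆ 𝕋` and `k ∈ ℤ`:
`∫ z^k ρ(z⁻¹X) dμ(z) = (∫ y^{−k} dρ(y)) (∫_X z^k dμ(z))`. -/
theorem circle_integral_translate_eq
    (μ : Measure Circle) [μ.IsHaarMeasure] [IsProbabilityMeasure μ]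
    (ρ : Measure Circle) [IsProbabilityMeasure ρ]
    (X : Set Circle) (hX : MeasurableSet X) (k : ℤ) :
    (∫ z : Circle, ((z : ℂ) ^ k) * ((ρ ((fun x => z * x) ⁻¹' X)).toReal : ℂ) ∂μ)
      = (∫ y : Circle, ((y : ℂ) ^ (-k)) ∂ρ) * ∫ z in X, ((z : ℂ) ^ k) ∂μ := by
  set f : Circle × Circle → ℂ :=
    fun p => ((p.1 : ℂ) ^ k) * X.indicator (fun _ => (1 : ℂ)) (p.1 * p.2) with hf
  have hXmeas : ∀ z : Circle, MeasurableSet ((fun x => z * x) ⁻¹' X) := fun z =>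
    hX.preimage (measurable_const_mul z)
  -- rewrite the measure as an integral of an indicator
  have h1 : ∀ z : Circle, ((ρ ((fun x => z * x) ⁻¹' X)).toReal : ℂ)
      = ∫ y, X.indicator (fun _ => (1 : ℂ)) (z * y) ∂ρ := by
    intro z
    have : ∀ y : Circle, X.indicator (fun _ => (1 : ℂ)) (z * y)
        = ((fun x => z * x) ⁻¹' X).indicator (fun _ => (1 : ℂ)) y := by
      intro y
      by_cases h : z * y ∈ X <;>
        simp [Set.indicator_apply, h, Set.mem_preimage]
    simp_rw [this]
    rw [integral_indicator_const (1 : ℂ) (hXmeas z)]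
    simp
    rfl
  -- measurability of f
  have hfm : AEStronglyMeasurable f (μ.prod ρ) := by
    apply AEStronglyMeasurable.mul
    · exact ((Circle.continuous_zpow_coe k).comp continuous_fst).aestronglyMeasurable
    · refine AEStronglyMeasurable.indicator ?_ (hX.preimage measurable_mul)
      exact aestronglyMeasurable_const
  have hfi : Integrable f (μ.prod ρ) := by
    refine ⟨hfm, ?_⟩
    apply HasFiniteIntegral.mono' (g := fun _ => (1 : ℝ))
      (hasFiniteIntegral_const 1)
    filter_upwards with p
    rw [norm_mul, Circle.norm_zpow_coe]
    by_cases h : p.1 * p.2 ∈ X <;> simp [Set.indicator_apply, h]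
  calc (∫ z : Circle, ((z : ℂ) ^ k) * ((ρ ((fun x => z * x) ⁻¹' X)).toReal : ℂ) ∂μ)
      = ∫ z, ∫ y, f (z, y) ∂ρ ∂μ := by
        simp_rw [hf, h1, ← integral_const_mul]
    _ = ∫ y, ∫ z, f (z, y) ∂μ ∂ρ := integral_integral_swap hfi
    _ = ∫ y, ((y : ℂ) ^ (-k)) * ∫ z in X, ((z : ℂ) ^ k) ∂μ ∂ρ := by
        refine integral_congr_ae (Filter.Eventually.of_forall fun y => ?_)
        have hinv := integral_mul_right_eq_self (μ := μ) (fun z => f (z, y)) y⁻¹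
        show (∫ z, f (z, y) ∂μ) = _
        rw [← hinv]
        have : ∀ z : Circle, f (z * y⁻¹, y)
            = ((y : ℂ) ^ (-k)) * (X.indicator (fun z : Circle => ((z : ℂ) ^ k)) z) := by
          intro z
          simp only [hf]
          rw [inv_mul_cancel_right]
          by_cases h : z ∈ X
          · simp only [Set.indicator_of_mem h]
            rw [Circle.coe_mul, Circle.coe_inv, mul_zpow, mul_one,
              inv_zpow, ← zpow_neg]
            ring
          · simp [Set.indicator_of_notMem h]
        simp_rw [this]
        rw [integral_const_mul, integral_indicator hX]
    _ = (∫ y : Circle, ((y : ℂ) ^ (-k)) ∂ρ) * ∫ z in X, ((z : ℂ) ^ k) ∂μ := by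
        rw [integral_mul_const]
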